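/- arXiv:2307.09453 — 2 statements merged into one kernel-verified Lean document; each statement's English description precedes it below -/
import Mathlib

section
/- Let N ≥ 3 be odd and let (S,E) be the cycle of length N. Let B in phi and I in B. Then the number of I' in B with I' ⊆ I equals (|I|+1)/2. -/
/-- The induced subgraph of `adj` on `I` is a path (type `A_m`, `m ≥ 1`):
there is an injective enumeration `f : Fin (m+1) → S` of `I` such that two
elements of `I` are adjacent iff they are consecutive in the enumeration. -/
def IsPathOn {S : Type} [DecidableEq S] (adj : S → S → Prop) (I : Finset S) : Prop :=
  ∃ (m : ℕ) (f : Fin (m + 1) → S), Function.Injective f ∧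
    I = Finset.image f Finset.univ ∧
    ∀ i j : Fin (m + 1), adj (f i) (f j) ↔ ((i : ℕ) + 1 = (j : ℕ) ∨ (j : ℕ) + 1 = (i : ℕ))

/-- The induced subgraph of `adj` on `I` is connected. -/
def ConnOn {S : Type} (adj : S → S → Prop) (I : Finset S) : Prop :=
  ∀ s ∈ I, ∀ t ∈ I, Relation.ReflTransGen (fun a b => a ∈ I ∧ b ∈ I ∧ adj a b) s t

/-- `I ∈ Cal_I^1`: the induced subgraph on `I` is a path and `|I|` is odd. -/
def CalI1 {S : Type} [DecidableEq S] (adj : S → S → Prop) (I : Finset S) : Prop :=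
  IsPathOn adj I ∧ Odd I.card

/-- `I ≺ I'`. -/
def Prec {S : Type} [DecidableEq S] (adj : S → S → Prop) (I I' : Finset S) : Prop :=
  I ⊂ I' ∧ ¬ ConnOn adj (I' \ I)

/-- `I ♠ I'`. -/
def Spade {S : Type} [DecidableEq S] (adj : S → S → Prop) (I I' : Finset S) : Prop :=
  I ∩ I' = ∅ ∧ ¬ ConnOn adj (I ∪ I')

/-- `I^{ev}`: the set of `s ∈ I` such that `I ∖ {s}` is the disjoint union of
`I', I'' ∈ Cal_I^1` with `I' ♠ I''`. -/
def Iev {S : Type} [DecidableEq S] (adj : S → S → Prop) (I : Finset S) : Set S :=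
  {s | s ∈ I ∧ ∃ I' I'' : Finset S, CalI1 adj I' ∧ CalI1 adj I'' ∧
    Spade adj I' I'' ∧ I.erase s = I' ∪ I''}

/-- Property (P0). -/
def P0 {S : Type} [DecidableEq S] (adj : S → S → Prop) (B : Finset (Finset S)) : Prop :=
  ∀ I ∈ B, ∀ I' ∈ B, I = I' ∨ Spade adj I I' ∨ Prec adj I I' ∨ Prec adj I' I

/-- Property (P1). -/
def P1 {S : Type} [DecidableEq S] (adj : S → S → Prop) (B : Finset (Finset S)) : Prop :=
  ∀ I ∈ B, ∃ (k : ℕ) (f : Fin k → Finset S),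
    (∀ j, f j ∈ B ∧ Prec adj (f j) I) ∧
    (∀ j j', j ≠ j' → Disjoint (f j) (f j')) ∧
    Iev adj I ⊆ ⋃ j, ((f j : Finset S) : Set S)

/-- `phi`: finite sets `B` of elements of `Cal_I^1` satisfying (P0) and (P1). -/
def phiSet {S : Type} [DecidableEq S] (adj : S → S → Prop) : Set (Finset (Finset S)) :=
  {B | (∀ I ∈ B, CalI1 adj I) ∧ P0 adj B ∧ P1 adj B}

/-- `supp(B)`. -/
def suppB {S : Type} [DecidableEq S] (B : Finset (Finset S)) : Finset S := B.biUnion id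

/-- `g_s(B)`. -/
def gs {S : Type} [DecidableEq S] (B : Finset (Finset S)) (s : S) : ℕ :=
  (B.filter (fun I => s ∈ I)).card

/-- `e_I = ∑_{s ∈ I} e_s`. -/
def eSum {S : Type} {V : Type} [AddCommGroup V] [Module (ZMod 2) V]
    (e : S → V) (I : Finset S) : V := ∑ s ∈ I, e s

/-- `L_B`: the `F`-span of `{e_I : I ∈ B}`. -/
def LB {S : Type} {V : Type} [AddCommGroup V] [Module (ZMod 2) V]
    (e : S → V) (B : Finset (Finset S)) : Submodule (ZMod 2) V :=
  Submodule.span (ZMod 2) ((fun I => eSum e I) '' (B : Set (Finset S)))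

/-- `eps(B) = ∑_{s ∈ S} ((g_s(B)(g_s(B)+1)/2) mod 2) e_s`. -/
def epsB {S : Type} [DecidableEq S] [Fintype S] {V : Type} [AddCommGroup V]
    [Module (ZMod 2) V] (e : S → V) (B : Finset (Finset S)) : V :=
  ∑ s : S, ((gs B s * (gs B s + 1) / 2 : ℕ) : ZMod 2) • e s

/-- The triple `(V, <,>, e)` (with graph `adj`) is perfect. -/
def IsPerfect {S : Type} [DecidableEq S] [Fintype S] {V : Type} [AddCommGroup V]
    [Module (ZMod 2) V] (adj : S → S → Prop) (e : S → V) : Prop :=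
  (∀ B ∈ phiSet adj,
      (LinearIndependent (ZMod 2) (fun I : {I : Finset S // I ∈ B} => eSum e I.1)) ∧
      (∀ I : Finset S, CalI1 adj I → (eSum e I ∈ LB e B ↔ I ∈ B))) ∧
  (∀ B ∈ phiSet adj, epsB e B ∈ LB e B) ∧
  Set.BijOn (epsB e) (phiSet adj) (⋃ B ∈ phiSet adj, ((LB e B : Submodule (ZMod 2) V) : Set V)) ∧
  (∀ B ∈ phiSet adj, ∀ B' ∈ phiSet adj, epsB e B' ∈ LB e B → ∀ s : S, gs B' s ≤ gs B s)
/-- Adjacency of the cycle of length `N` on `S = ZMod N`. -/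
def cadj (N : ℕ) (i j : ZMod N) : Prop := j = i + 1 ∨ i = j + 1

/-- `V = F^S` for `S = ZMod N`. -/
abbrev Vc (N : ℕ) := ZMod N → ZMod 2

/-- The standard basis vector `e_s`. -/
def eVec (N : ℕ) (s : ZMod N) : Vc N := Pi.single s 1

/-- The line `F·e_S`, where `e_S = ∑_{s ∈ S} e_s`. -/
def radN (N : ℕ) [NeZero N] : Submodule (ZMod 2) (Vc N) :=
  Submodule.span (ZMod 2) {eSum (eVec N) Finset.univ}

/-- `Vbar = V / (F·e_S)`. -/
abbrev VbarN (N : ℕ) [NeZero N] := Vc N ⧸ radN N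

/-- The quotient map `pi : V → Vbar`. -/
def piQ (N : ℕ) [NeZero N] : Vc N →ₗ[ZMod 2] VbarN N := (radN N).mkQ

/-- `ebar_s = pi(e_s)`. -/
def ebar (N : ℕ) [NeZero N] (s : ZMod N) : VbarN N := piQ N (eVec N s)
open scoped Classical in
/-- The connected component of `s` in the induced subgraph of `adj` on `I`. -/
noncomputable def compOf {S : Type} [DecidableEq S] (adj : S → S → Prop)
    (I : Finset S) (s : S) : Finset S :=
  I.filter (fun t => Relation.ReflTransGen (fun a b => a ∈ I ∧ b ∈ I ∧ adj a b) s t)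

/-- `c(I)`: the set of vertex sets of connected components of the induced subgraph on `I`. -/
noncomputable def comps {S : Type} [DecidableEq S] (adj : S → S → Prop)
    (I : Finset S) : Finset (Finset S) :=
  I.image (compOf adj I)

/-- `|c^0(I)|`: the number of connected components of even cardinality. -/
noncomputable def c0card {S : Type} [DecidableEq S] (adj : S → S → Prop)
    (I : Finset S) : ℕ :=
  ((comps adj I).filter (fun C => Even C.card)).card

/-- `V_0 = {e_I : I ⊊ S with |c^0(I)| even}`. -/
def V0set (N : ℕ) [NeZero N] : Set (Vc N) :=
  {v | ∃ I : Finset (ZMod N), I ≠ Finset.univ ∧ Even (c0card (cadj N) I) ∧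
    v = eSum (eVec N) I}

/-- `V_1 = {e_S} ∪ {e_I : ∅ ≠ I ⊊ S with |c^0(I)| odd}`. -/
def V1set (N : ℕ) [NeZero N] : Set (Vc N) :=
  {v | v = eSum (eVec N) Finset.univ ∨ ∃ I : Finset (ZMod N), I ≠ ∅ ∧ I ≠ Finset.univ ∧
    Odd (c0card (cadj N) I) ∧ v = eSum (eVec N) I}
open scoped Classical in
/-- `I^{odd} = I ∖ I^{ev}` (as a `Finset`). -/
noncomputable def IoddF {S : Type} [DecidableEq S] (adj : S → S → Prop)
    (I : Finset S) : Finset S :=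
  I.filter (fun s => s ∉ Iev adj I)

/-- `n_B = |{I ∈ B : ee ⊆ I}|`. -/
def nB {S : Type} [DecidableEq S] (ee : Finset S) (B : Finset (Finset S)) : ℕ :=
  (B.filter (fun I => ee ⊆ I)).card

open scoped Classical in
/-- `B ↦ B^!`: remove the unique `I_B ∈ B` with `|I_B ∩ ee| = 1` when `n_B` is odd;
leave `B` unchanged when `n_B` is even. -/
noncomputable def bangF {S : Type} [DecidableEq S] (ee : Finset S)
    (B : Finset (Finset S)) : Finset (Finset S) :=
  if h : Odd (nB ee B) ∧ ∃ I ∈ B, (I ∩ ee).card = 1 then B.erase h.2.choose else B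

/-- `omega = {B^! : B ∈ phi}`. -/
def omegaSet {S : Type} [DecidableEq S] (adj : S → S → Prop) (ee : Finset S) :
    Set (Finset (Finset S)) :=
  (bangF ee) '' (phiSet adj)

open scoped Classical in
/-- `Btilde`: the unique element of `phi` with `Btilde^! = B`. -/
noncomputable def tildeF {S : Type} [DecidableEq S] (adj : S → S → Prop) (ee : Finset S)
    (C : Finset (Finset S)) : Finset (Finset S) :=
  if h : ∃ B ∈ phiSet adj, bangF ee B = C then h.choose else ∅

/-- `'eps(B) = eps(Btilde)`. -/
noncomputable def epsO {S : Type} [DecidableEq S] [Fintype S] {V : Type} [AddCommGroup V]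
    [Module (ZMod 2) V] (adj : S → S → Prop) (ee : Finset S) (e : S → V)
    (C : Finset (Finset S)) : V :=
  epsB e (tildeF adj ee C)

/-- `B' ⪯ B` on `omega`. -/
def preceqO {S : Type} [DecidableEq S] [Fintype S] {V : Type} [AddCommGroup V]
    [Module (ZMod 2) V] (adj : S → S → Prop) (ee : Finset S) (e : S → V)
    (B' B : Finset (Finset S)) : Prop :=
  ∃ (k : ℕ) (c : ℕ → Finset (Finset S)), c 0 = B' ∧ c k = B ∧
    (∀ i ≤ k, c i ∈ omegaSet adj ee) ∧
    (∀ i < k, epsO adj ee e (c i) ∈ LB e (c (i + 1)))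

/-- The linear form `v ↦ v t + v t'` on `V`. -/
def zeeV (N : ℕ) (t t' : ZMod N) : Vc N →ₗ[ZMod 2] ZMod 2 :=
  (LinearMap.proj t : Vc N →ₗ[ZMod 2] ZMod 2) + (LinearMap.proj t' : Vc N →ₗ[ZMod 2] ZMod 2)

/-- `z_ee : Vbar → F`, the linear map with `z_ee(ebar_s) = 1` iff `s ∈ ee = {t,t'}`. -/
noncomputable def zee (N : ℕ) [NeZero N] (t t' : ZMod N) : VbarN N →ₗ[ZMod 2] ZMod 2 :=
  Submodule.liftQ (radN N) (zeeV N t t') (by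
    rw [radN, Submodule.span_le, Set.singleton_subset_iff]
    have h1 : ∀ u : ZMod N, (eSum (eVec N) Finset.univ) u = 1 := by
      intro u
      simp [eSum, eVec, Finset.sum_apply, Finset.sum_pi_single]
    simp only [SetLike.mem_coe, LinearMap.mem_ker, zeeV, LinearMap.add_apply,
      LinearMap.proj_apply, h1]
    decide)
/-- The maximal elements of a finite family of finsets, under inclusion. -/
def maxElts {S : Type} [DecidableEq S] (C : Finset (Finset S)) : Finset (Finset S) :=
  C.filter (fun I => ∀ I' ∈ C, ¬ I ⊂ I')


lemma mem_maxElts {S : Type} [DecidableEq S] {C : Finset (Finset S)} {J : Finset S} :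
    J ∈ maxElts C ↔ J ∈ C ∧ ∀ K ∈ C, ¬ J ⊂ K := Finset.mem_filter

lemma maxElts_subset {S : Type} [DecidableEq S] {C : Finset (Finset S)} :
    maxElts C ⊆ C := fun J hJ => (mem_maxElts.1 hJ).1

/-- `restB B k = B ∖ (B_1 ∪ … ∪ B_k)`: what remains of `B` after removing the first
`k` layers; the `k`-th layer (`k ≥ 1`) is `B_k = maxElts (restB B (k-1))`. -/
def restB {S : Type} [DecidableEq S] (B : Finset (Finset S)) : ℕ → Finset (Finset S)
  | 0 => B
  | k + 1 => restB B k \ maxElts (restB B k)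

/-- The relation `B' ≤ B` on `phi(V)`. -/
def lePhi {S : Type} [DecidableEq S] [Fintype S] {V : Type} [AddCommGroup V]
    [Module (ZMod 2) V] (adj : S → S → Prop) (e : S → V)
    (B' B : Finset (Finset S)) : Prop :=
  ∃ (k : ℕ) (c : ℕ → Finset (Finset S)), c 0 = B' ∧ c k = B ∧
    (∀ i ≤ k, c i ∈ phiSet adj) ∧
    (∀ i < k, epsB e (c i) ∈ LB e (c (i + 1)))



section Aux
variable {S : Type} [DecidableEq S] {adj : S → S → Prop} {m : ℕ} {f : Fin (m+1) → S}

def idxSet (m a b : ℕ) : Finset (Fin (m+1)) :=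
  Finset.univ.filter (fun i => a ≤ i.val ∧ i.val ≤ b)

lemma mem_idxSet {a b : ℕ} {i : Fin (m+1)} : i ∈ idxSet m a b ↔ a ≤ i.val ∧ i.val ≤ b := by
  simp [idxSet]

lemma idxSet_card {a b : ℕ} (hab : a ≤ b) (hb : b ≤ m) : (idxSet m a b).card = b - a + 1 := by
  have h : (idxSet m a b).image Fin.val = Finset.Icc a b := by
    ext u
    simp only [Finset.mem_image, mem_idxSet, Finset.mem_Icc]
    constructor
    · rintro ⟨i, ⟨h1, h2⟩, rfl⟩; exact ⟨h1, h2⟩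
    · rintro ⟨h1, h2⟩; exact ⟨⟨u, by omega⟩, ⟨h1, h2⟩, rfl⟩
  have := Finset.card_image_of_injective (idxSet m a b) Fin.val_injective
  rw [h] at this
  rw [← this, Nat.card_Icc]; omega

lemma mem_Itv {a b : ℕ} {x : S} :
    x ∈ (idxSet m a b).image f ↔ ∃ u : Fin (m+1), a ≤ u.val ∧ u.val ≤ b ∧ f u = x := by
  simp only [Finset.mem_image, mem_idxSet]
  constructor
  · rintro ⟨u, ⟨h1, h2⟩, rfl⟩; exact ⟨u, h1, h2, rfl⟩
  · rintro ⟨u, h1, h2, rfl⟩; exact ⟨u, ⟨h1, h2⟩, rfl⟩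

lemma connOn_Itv (hadj : ∀ i j : Fin (m+1), adj (f i) (f j) ↔ ((i:ℕ)+1 = (j:ℕ) ∨ (j:ℕ)+1 = (i:ℕ)))
    (a b : ℕ) : ConnOn adj ((idxSet m a b).image f) := by
  set U := (idxSet m a b).image f with hU
  have aux : ∀ (k : ℕ) (i j : Fin (m+1)), i ∈ idxSet m a b → j ∈ idxSet m a b →
      (j : ℕ) = (i : ℕ) + k →
      Relation.ReflTransGen (fun x y => x ∈ U ∧ y ∈ U ∧ adj x y) (f i) (f j) := by
    intro k
    induction k with
    | zero =>
      intro i j hi hj h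
      have : i = j := Fin.ext (by omega)
      subst this; exact .refl
    | succ k ih =>
      intro i j hi hj h
      have hjm : (j : ℕ) ≤ m := Nat.lt_succ_iff.1 j.isLt
      rw [mem_idxSet] at hi hj
      have hj'mem : (⟨(i : ℕ) + k, by omega⟩ : Fin (m+1)) ∈ idxSet m a b := by
        rw [mem_idxSet]; constructor <;> simp <;> omega
      refine .tail (ih i ⟨(i:ℕ)+k, by omega⟩ (by rw [mem_idxSet]; exact ⟨hi.1, hi.2⟩) hj'mem rfl) ?_
      refine ⟨Finset.mem_image_of_mem f hj'mem, Finset.mem_image_of_mem f (by rw [mem_idxSet]; exact ⟨hj.1, hj.2⟩), ?_⟩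
      rw [hadj]; left; simp; omega
  intro s hs t ht
  obtain ⟨i, hi, rfl⟩ := Finset.mem_image.1 hs
  obtain ⟨j, hj, rfl⟩ := Finset.mem_image.1 ht
  rcases le_total (i : ℕ) (j : ℕ) with h | h
  · exact aux ((j:ℕ) - (i:ℕ)) i j hi hj (by omega)
  · have hsymm : Symmetric (fun x y => x ∈ U ∧ y ∈ U ∧ adj x y) := by
      rintro x y ⟨hx, hy, hxy⟩
      refine ⟨hy, hx, ?_⟩
      obtain ⟨u, _, rfl⟩ := Finset.mem_image.1 hx
      obtain ⟨v, _, rfl⟩ := Finset.mem_image.1 hy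
      rw [hadj] at hxy ⊢
      tauto
    exact (@Relation.ReflTransGen.stdSymm _ _ ⟨hsymm⟩).symm _ _ (aux ((i:ℕ) - (j:ℕ)) j i hj hi (by omega))

lemma not_connOn_cut (hinj : Function.Injective f)
    (hadj : ∀ i j : Fin (m+1), adj (f i) (f j) ↔ ((i:ℕ)+1 = (j:ℕ) ∨ (j:ℕ)+1 = (i:ℕ)))
    {T : Finset (Fin (m+1))} {p i j : Fin (m+1)}
    (hp : p ∉ T) (hi : i ∈ T) (hj : j ∈ T)
    (h1 : (i:ℕ) < (p:ℕ)) (h2 : (p:ℕ) < (j:ℕ)) : ¬ ConnOn adj (T.image f) := by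
  intro h
  have hrtg := h (f i) (Finset.mem_image_of_mem f hi) (f j) (Finset.mem_image_of_mem f hj)
  have key : ∀ x, Relation.ReflTransGen
      (fun x y => x ∈ T.image f ∧ y ∈ T.image f ∧ adj x y) (f i) x →
      ∃ u : Fin (m+1), u ∈ T ∧ x = f u ∧ (u:ℕ) < (p:ℕ) := by
    intro x hx
    induction hx with
    | refl => exact ⟨i, hi, rfl, h1⟩
    | tail _ hstep ih =>
      obtain ⟨u, hu, rfl, hup⟩ := ih
      obtain ⟨_, hc, hadj'⟩ := hstep
      obtain ⟨v, hv, rfl⟩ := Finset.mem_image.1 hc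
      rw [hadj] at hadj'
      have hvp : (v:ℕ) ≠ (p:ℕ) := by
        intro hvpe
        exact hp (by rwa [Fin.ext hvpe] at hv)
      exact ⟨v, hv, rfl, by omega⟩
  obtain ⟨u, hu, hx, hup⟩ := key (f j) hrtg
  have : j = u := hinj hx
  omega

lemma isPathOn_Itv (hinj : Function.Injective f)
    (hadj : ∀ i j : Fin (m+1), adj (f i) (f j) ↔ ((i:ℕ)+1 = (j:ℕ) ∨ (j:ℕ)+1 = (i:ℕ)))
    {a b : ℕ} (hab : a ≤ b) (hb : b ≤ m) :
    IsPathOn adj ((idxSet m a b).image f) := by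
  refine ⟨b - a, fun i => f ⟨a + i.val, by have := i.isLt; omega⟩, ?_, ?_, ?_⟩
  · intro i j h
    have h2 := hinj h
    have h3 : a + i.val = a + j.val := congrArg Fin.val h2
    exact Fin.ext (by omega)
  · ext x
    rw [mem_Itv]
    simp only [Finset.mem_image, Finset.mem_univ, true_and]
    constructor
    · rintro ⟨u, h1, h2, rfl⟩
      refine ⟨⟨u.val - a, by omega⟩, ?_⟩
      congr 1
      exact Fin.ext (by simp; omega)
    · rintro ⟨i, rfl⟩
      exact ⟨⟨a + i.val, by have := i.isLt; omega⟩, by simp, by have := i.isLt; simp; omega, rfl⟩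
  · intro i j
    have hi := i.isLt
    have hj := j.isLt
    rw [hadj]
    show (a + (i:ℕ) + 1 = a + (j:ℕ) ∨ a + (j:ℕ) + 1 = a + (i:ℕ)) ↔ _
    omega

lemma Itv_card (hinj : Function.Injective f) {a b : ℕ} (hab : a ≤ b) (hb : b ≤ m) :
    ((idxSet m a b).image f).card = b - a + 1 := by
  rw [Finset.card_image_of_injective _ hinj, idxSet_card hab hb]

lemma interval_of_path (hinj : Function.Injective f)
    (hadj : ∀ i j : Fin (m+1), adj (f i) (f j) ↔ ((i:ℕ)+1 = (j:ℕ) ∨ (j:ℕ)+1 = (i:ℕ)))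
    {I' : Finset S} (hsub : I' ⊆ Finset.image f Finset.univ) (hpath : IsPathOn adj I') :
    ∃ a b : ℕ, a ≤ b ∧ b ≤ m ∧ I' = (idxSet m a b).image f := by
  obtain ⟨m', g, hginj, hgimg, hgadj⟩ := hpath
  have hmem : ∀ i : ℕ, ∃ u : ℕ, ∃ (hu : u ≤ m), ∀ (hi : i ≤ m'),
      f ⟨u, Nat.lt_succ_of_le hu⟩ = g ⟨i, Nat.lt_succ_of_le hi⟩ := by
    intro i
    by_cases hi : i ≤ m'
    · have hg : g ⟨i, Nat.lt_succ_of_le hi⟩ ∈ I' := by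
        rw [hgimg]; exact Finset.mem_image_of_mem g (Finset.mem_univ _)
      have := hsub hg
      simp only [Finset.mem_image, Finset.mem_univ, true_and] at this
      obtain ⟨u, hu⟩ := this
      refine ⟨u.val, Nat.lt_succ_iff.1 u.isLt, fun hi' => ?_⟩
      rw [show (⟨u.val, _⟩ : Fin (m+1)) = u from Fin.ext rfl, hu]
    · exact ⟨0, Nat.zero_le m, fun hi' => absurd hi' hi⟩
  choose d hd hval using hmem
  have hstep : ∀ i : ℕ, i + 1 ≤ m' → (d (i+1) = d i + 1 ∨ d i = d (i+1) + 1) := by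
    intro i h
    have h1 : adj (g ⟨i, by omega⟩) (g ⟨i+1, by omega⟩) := by
      rw [hgadj]; left; rfl
    rw [← hval i (by omega), ← hval (i+1) h] at h1
    rw [hadj] at h1
    simp only [Fin.val_mk] at h1
    omega
  have hdist : ∀ (k i : ℕ), i + k ≤ m' → d (i+k) ≤ d i + k ∧ d i ≤ d (i+k) + k := by
    intro k
    induction k with
    | zero =>
      intro i h
      show d i ≤ d i + 0 ∧ d i ≤ d i + 0
      omega
    | succ k ih =>
      intro i h
      have h1 := ih i (by omega)
      have h2 := hstep (i+k) (by omega)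
      show d ((i+k)+1) ≤ d i + (k+1) ∧ d i ≤ d ((i+k)+1) + (k+1)
      omega
  have hdist' : ∀ i j : ℕ, i ≤ m' → j ≤ m' → d i ≤ d j + m' := by
    intro i j hi hj
    rcases le_total i j with h | h
    · have := hdist (j - i) i (by omega)
      rw [show i + (j - i) = j by omega] at this
      omega
    · have := hdist (i - j) j (by omega)
      rw [show j + (i - j) = i by omega] at this
      omega
  set T : Finset ℕ := (Finset.range (m'+1)).image d with hT
  have hTne : T.Nonempty := ⟨d 0, Finset.mem_image_of_mem d (by simp)⟩
  have hdinj : ∀ i ∈ Finset.range (m'+1), ∀ j ∈ Finset.range (m'+1), d i = d j → i = j := by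
    intro i hi j hj hde
    rw [Finset.mem_range] at hi hj
    have : f ⟨d i, Nat.lt_succ_of_le (hd i)⟩ = f ⟨d j, Nat.lt_succ_of_le (hd j)⟩ := by
      congr 1; exact Fin.ext hde
    rw [hval i (by omega), hval j (by omega)] at this
    have := hginj this
    exact congrArg Fin.val this
  have hTcard : T.card = m' + 1 := by
    rw [hT, Finset.card_image_of_injOn hdinj, Finset.card_range]
  set a := T.min' hTne with ha
  set b := T.max' hTne with hb2
  obtain ⟨ia, hia, hia2⟩ := Finset.mem_image.1
    (show T.min' hTne ∈ Finset.image d (Finset.range (m'+1)) from T.min'_mem hTne)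
  obtain ⟨ib, hib, hib2⟩ := Finset.mem_image.1
    (show T.max' hTne ∈ Finset.image d (Finset.range (m'+1)) from T.max'_mem hTne)
  rw [Finset.mem_range] at hia hib
  have hba : b ≤ a + m' := by
    have := hdist' ib ia (by omega) (by omega)
    omega
  have hab : a ≤ b := T.min'_le _ (T.max'_mem hTne)
  have hsubIcc : T ⊆ Finset.Icc a b := by
    intro u hu
    rw [Finset.mem_Icc]
    exact ⟨T.min'_le u hu, T.le_max' u hu⟩
  have hTeq : T = Finset.Icc a b := by
    apply Finset.eq_of_subset_of_card_le hsubIcc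
    rw [Nat.card_Icc, hTcard]; omega
  have hbm : b ≤ m := by rw [hb2, ← hib2]; exact hd ib
  refine ⟨a, b, hab, hbm, ?_⟩
  ext x
  rw [hgimg, mem_Itv]
  simp only [Finset.mem_image, Finset.mem_univ, true_and]
  constructor
  · rintro ⟨i, rfl⟩
    have hdi : d i.val ∈ T := Finset.mem_image_of_mem d (by simp [Finset.mem_range, i.isLt])
    rw [hTeq, Finset.mem_Icc] at hdi
    refine ⟨⟨d i.val, Nat.lt_succ_of_le (hd i.val)⟩, hdi.1, hdi.2, ?_⟩
    rw [hval i.val (Nat.lt_succ_iff.1 i.isLt)]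
  · rintro ⟨u, h1, h2, rfl⟩
    have hu : u.val ∈ T := by rw [hTeq, Finset.mem_Icc]; exact ⟨h1, h2⟩
    rw [hT] at hu
    obtain ⟨i, hi, hie⟩ := Finset.mem_image.1 hu
    rw [Finset.mem_range] at hi
    refine ⟨⟨i, by omega⟩, ?_⟩
    rw [← hval i (by omega)]
    congr 1
    exact Fin.ext hie

end Aux

section Aux2
variable {S : Type} [DecidableEq S] {adj : S → S → Prop} {m : ℕ} {f : Fin (m+1) → S}

lemma calI1_nonempty {I : Finset S} (h : CalI1 adj I) : I.Nonempty := by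
  obtain ⟨⟨m', g, _, himg, _⟩, _⟩ := h
  exact ⟨g 0, by rw [himg]; exact Finset.mem_image_of_mem g (Finset.mem_univ _)⟩

lemma mem_Iev (hinj : Function.Injective f)
    (hadj : ∀ i j : Fin (m+1), adj (f i) (f j) ↔ ((i:ℕ)+1 = (j:ℕ) ∨ (j:ℕ)+1 = (i:ℕ)))
    (hme : Even m) {p : ℕ} (hp : Odd p) (hpm : p < m) :
    f ⟨p, by omega⟩ ∈ Iev adj (Finset.image f Finset.univ) := by
  have hp1 : 1 ≤ p := hp.pos
  refine ⟨Finset.mem_image_of_mem f (Finset.mem_univ _),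
    (idxSet m 0 (p-1)).image f, (idxSet m (p+1) m).image f, ?_, ?_, ?_, ?_⟩
  · refine ⟨isPathOn_Itv hinj hadj (by omega) (by omega), ?_⟩
    rw [Itv_card hinj (by omega) (by omega)]
    obtain ⟨u, hu⟩ := hp
    exact ⟨u, by omega⟩
  · refine ⟨isPathOn_Itv hinj hadj (by omega) le_rfl, ?_⟩
    rw [Itv_card hinj (by omega) le_rfl]
    obtain ⟨u, hu⟩ := hp
    obtain ⟨v, hv⟩ := hme
    exact ⟨v - u - 1, by omega⟩
  · constructor
    · rw [← Finset.image_inter _ _ hinj]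
      have : idxSet m 0 (p-1) ∩ idxSet m (p+1) m = ∅ := by
        ext i
        simp only [Finset.mem_inter, mem_idxSet, Finset.notMem_empty, iff_false]
        omega
      rw [this, Finset.image_empty]
    · rw [← Finset.image_union]
      refine not_connOn_cut hinj hadj (T := idxSet m 0 (p-1) ∪ idxSet m (p+1) m)
        (p := ⟨p, by omega⟩) (i := ⟨p-1, by omega⟩) (j := ⟨p+1, by omega⟩) ?_ ?_ ?_ ?_ ?_
      · simp only [Finset.mem_union, mem_idxSet]
        show ¬ ((0 ≤ p ∧ p ≤ p - 1) ∨ (p + 1 ≤ p ∧ p ≤ m))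
        omega
      · rw [Finset.mem_union, mem_idxSet, mem_idxSet]
        show (0 ≤ p - 1 ∧ p - 1 ≤ p - 1) ∨ _
        left; omega
      · rw [Finset.mem_union, mem_idxSet, mem_idxSet]
        show _ ∨ (p + 1 ≤ p + 1 ∧ p + 1 ≤ m)
        right; omega
      · show p - 1 < p; omega
      · show p < p + 1; omega
  · rw [← Finset.image_union, ← Finset.image_erase hinj]
    congr 1
    ext i
    simp only [Finset.mem_erase, Finset.mem_univ, and_true, Finset.mem_union, mem_idxSet]
    have hilt := i.isLt
    constructor
    · intro hne
      have : (i : ℕ) ≠ p := fun h => hne (Fin.ext h)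
      omega
    · intro h
      have h2 : (i : ℕ) ≠ p := by omega
      exact fun he => h2 (by rw [he])

end Aux2

/-- for `B ∈ phi` and `I ∈ B`, `|{I' ∈ B : I' ⊆ I}| = (|I|+1)/2`. -/
theorem statement10 (N : ℕ) [NeZero N] (hN : 3 ≤ N) (hodd : Odd N)
    (B : Finset (Finset (ZMod N))) (hB : B ∈ phiSet (cadj N))
    (I : Finset (ZMod N)) (hI : I ∈ B) :
    (B.filter (fun I' => I' ⊆ I)).card = (I.card + 1) / 2 := by
  classical
  obtain ⟨hcal, hP0, hP1⟩ := hB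
  suffices H : ∀ n : ℕ, ∀ I ∈ B, I.card ≤ n →
      (B.filter (fun I' => I' ⊆ I)).card = (I.card + 1) / 2 by
    exact H I.card I hI le_rfl
  intro n
  induction n with
  | zero =>
    intro I hI hle
    have h1 := calI1_nonempty (hcal I hI)
    have h2 := Finset.card_pos.2 h1
    omega
  | succ n ih =>
    intro I hI hle
    obtain ⟨⟨m, f, hinj, hIimg, hadj⟩, hIodd⟩ := hcal I hI
    have hIcard : I.card = m + 1 := by
      rw [hIimg, Finset.card_image_of_injective _ hinj, Finset.card_univ, Fintype.card_fin]
    obtain ⟨t, ht⟩ : ∃ t, m = 2 * t := by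
      rw [hIcard] at hIodd; obtain ⟨u, hu⟩ := hIodd; exact ⟨u, by omega⟩
    have hme : Even m := ⟨t, by omega⟩
    set D := B.filter (fun I' => I' ⊂ I) with hD
    set M := maxElts D with hM
    have hDmem : ∀ {I' : Finset (ZMod N)}, I' ∈ D ↔ I' ∈ B ∧ I' ⊂ I := by
      intro I'; rw [hD]; exact Finset.mem_filter
    have hMD : M ⊆ D := by rw [hM]; exact maxElts_subset
    have hMmax : ∀ J ∈ M, ∀ K ∈ D, ¬ J ⊂ K := by
      intro J hJ
      rw [hM, mem_maxElts] at hJ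
      exact hJ.2
    have hMmem : ∀ J ∈ M, J ∈ B ∧ J ⊂ I := fun J hJ => hDmem.1 (hMD hJ)
    have exists_max : ∀ I' ∈ D, ∃ J ∈ M, I' ⊆ J := by
      intro I' hI'
      obtain ⟨J, hJ, hJmax⟩ := Finset.exists_maximal (s := D.filter (fun K => I' ⊆ K))
        ⟨I', Finset.mem_filter.2 ⟨hI', Finset.Subset.refl _⟩⟩
      rw [Finset.mem_filter] at hJ
      refine ⟨J, ?_, hJ.2⟩
      rw [hM, mem_maxElts]
      refine ⟨hJ.1, fun K hK hJK => ?_⟩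
      exact not_subset_of_ssubset hJK (hJmax (Finset.mem_filter.2 ⟨hK, hJ.2.trans hJK.subset⟩) hJK.subset)
    have hPrecJI : ∀ J ∈ M, Prec (cadj N) J I := by
      intro J hJ
      obtain ⟨hJB, hJI⟩ := hMmem J hJ
      rcases hP0 J hJB I hI with h | h | h | h
      · exact absurd h (Finset.ssubset_iff_subset_ne.1 hJI).2
      · exfalso
        obtain ⟨x, hx⟩ := calI1_nonempty (hcal J hJB)
        have hx2 : x ∈ J ∩ I := Finset.mem_inter.2 ⟨hx, hJI.subset hx⟩
        rw [h.1] at hx2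
        exact absurd hx2 (Finset.notMem_empty x)
      · exact h
      · exact absurd (h.1.trans hJI) (ssubset_irrefl I)
    have hSpadeMM : ∀ J ∈ M, ∀ J' ∈ M, J ≠ J' → Spade (cadj N) J J' := by
      intro J hJ J' hJ' hne
      rcases hP0 J (hMmem J hJ).1 J' (hMmem J' hJ').1 with h | h | h | h
      · exact absurd h hne
      · exact h
      · exact absurd h.1 (hMmax J hJ J' (hMD hJ'))
      · exact absurd h.1 (hMmax J' hJ' J (hMD hJ))
    have hrep : ∀ J : Finset (ZMod N), ∃ a b : ℕ, J ∈ M →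
        a ≤ b ∧ b ≤ m ∧ J = (idxSet m a b).image f ∧ J.card = b - a + 1 ∧
        1 ≤ a ∧ b + 1 ≤ m := by
      intro J
      by_cases hJ : J ∈ M
      swap
      · exact ⟨0, 0, fun h => absurd h hJ⟩
      obtain ⟨hJB, hJI⟩ := hMmem J hJ
      obtain ⟨a, b, hab, hbm, hJeq⟩ := interval_of_path hinj hadj
        (by rw [← hIimg]; exact hJI.subset) (hcal J hJB).1
      have hJcard : J.card = b - a + 1 := by rw [hJeq, Itv_card hinj hab hbm]
      have hprec := hPrecJI J hJ
      have hIJ : I \ J = (Finset.univ \ idxSet m a b).image f := by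
        rw [Finset.image_sdiff _ _ hinj, ← hIimg, hJeq]
      have hnotall : ¬ (a = 0 ∧ b = m) := by
        rintro ⟨ha0, hbm0⟩
        have huniv : idxSet m a b = Finset.univ := by
          ext i
          simp only [mem_idxSet, Finset.mem_univ, iff_true]
          have := i.isLt
          omega
        rw [huniv, ← hIimg] at hJeq
        exact (Finset.ssubset_iff_subset_ne.1 hJI).2 hJeq
      have ha1 : 1 ≤ a := by
        by_contra hacon
        have ha0 : a = 0 := by omega
        have hbm' : b < m := by omega
        apply hprec.2
        have hcompl : Finset.univ \ idxSet m a b = idxSet m (b+1) m := by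
          ext i
          simp only [Finset.mem_sdiff, Finset.mem_univ, true_and, mem_idxSet]
          have := i.isLt; omega
        rw [hIJ, hcompl]
        exact connOn_Itv hadj _ _
      have hb1 : b + 1 ≤ m := by
        by_contra hbcon
        have hbm' : b = m := by omega
        apply hprec.2
        have hcompl : Finset.univ \ idxSet m a b = idxSet m 0 (a-1) := by
          ext i
          simp only [Finset.mem_sdiff, Finset.mem_univ, true_and, mem_idxSet]
          have := i.isLt; omega
        rw [hIJ, hcompl]
        exact connOn_Itv hadj _ _
      exact ⟨a, b, fun _ => ⟨hab, hbm, hJeq, hJcard, ha1, hb1⟩⟩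
    choose aJ bJ hJprops using hrep
    have hcover : ∀ p : ℕ, Odd p → p < m → ∃ J ∈ M, aJ J ≤ p ∧ p ≤ bJ J := by
      intro p hp hpm
      have hpI : f ⟨p, by omega⟩ ∈ Iev (cadj N) I := by
        rw [hIimg]; exact mem_Iev hinj hadj hme hp hpm
      obtain ⟨k, ch, hch1, hch2, hch3⟩ := hP1 I hI
      have hmem2 := hch3 hpI
      rw [Set.mem_iUnion] at hmem2
      obtain ⟨j, hj⟩ := hmem2
      rw [Finset.mem_coe] at hj
      have hchD : ch j ∈ D := hDmem.2 ⟨(hch1 j).1, (hch1 j).2.1⟩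
      obtain ⟨J, hJM, hsubJ⟩ := exists_max (ch j) hchD
      obtain ⟨hab, hbm, hJeq, _, _, _⟩ := hJprops J hJM
      have hfp : f ⟨p, by omega⟩ ∈ J := hsubJ hj
      rw [hJeq, mem_Itv] at hfp
      obtain ⟨u, h1, h2, hfu⟩ := hfp
      have hup : (u : ℕ) = p := congrArg Fin.val (hinj hfu)
      exact ⟨J, hJM, by omega, by omega⟩
    have hsep : ∀ J ∈ M, ∀ J' ∈ M, J ≠ J' → bJ J + 1 < aJ J' ∨ bJ J' + 1 < aJ J := by
      intro J hJ J' hJ' hne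
      obtain ⟨hab, hbm, hJeq, _, ha1, hb1⟩ := hJprops J hJ
      obtain ⟨hab', hbm', hJeq', _, ha1', hb1'⟩ := hJprops J' hJ'
      obtain ⟨hint, hcon⟩ := hSpadeMM J hJ J' hJ' hne
      have hdisj : bJ J < aJ J' ∨ bJ J' < aJ J := by
        by_contra hcontra
        push_neg at hcontra
        have hu1 : f ⟨max (aJ J) (aJ J'), by omega⟩ ∈
            Finset.image f (idxSet m (aJ J) (bJ J)) := by
          refine mem_Itv.2 ⟨⟨max (aJ J) (aJ J'), by omega⟩, ?_, ?_, rfl⟩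
          · show aJ J ≤ max (aJ J) (aJ J'); omega
          · show max (aJ J) (aJ J') ≤ bJ J; omega
        have hu2 : f ⟨max (aJ J) (aJ J'), by omega⟩ ∈
            Finset.image f (idxSet m (aJ J') (bJ J')) := by
          refine mem_Itv.2 ⟨⟨max (aJ J) (aJ J'), by omega⟩, ?_, ?_, rfl⟩
          · show aJ J' ≤ max (aJ J) (aJ J'); omega
          · show max (aJ J) (aJ J') ≤ bJ J'; omega
        rw [← hJeq] at hu1
        rw [← hJeq'] at hu2
        have : f ⟨max (aJ J) (aJ J'), by omega⟩ ∈ J ∩ J' := Finset.mem_inter.2 ⟨hu1, hu2⟩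
        rw [hint] at this
        exact absurd this (Finset.notMem_empty _)
      rcases hdisj with h | h
      · left
        by_contra hadj2
        have heq : aJ J' = bJ J + 1 := by omega
        have hid : idxSet m (aJ J) (bJ J) ∪ idxSet m (aJ J') (bJ J') =
            idxSet m (aJ J) (bJ J') := by
          ext i
          simp only [Finset.mem_union, mem_idxSet]
          omega
        apply hcon
        rw [hJeq, hJeq', ← Finset.image_union, hid]
        exact connOn_Itv hadj _ _
      · right
        by_contra hadj2
        have heq : aJ J = bJ J' + 1 := by omega
        have hid : idxSet m (aJ J) (bJ J) ∪ idxSet m (aJ J') (bJ J') =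
            idxSet m (aJ J') (bJ J) := by
          ext i
          simp only [Finset.mem_union, mem_idxSet]
          omega
        apply hcon
        rw [hJeq, hJeq', ← Finset.image_union, hid]
        exact connOn_Itv hadj _ _
    have hdisjIcc : ∀ J ∈ M, ∀ J' ∈ M, J ≠ J' →
        Disjoint (Finset.Icc (aJ J) (bJ J + 1)) (Finset.Icc (aJ J') (bJ J' + 1)) := by
      intro J hJ J' hJ' hne
      have := hsep J hJ J' hJ' hne
      rw [Finset.disjoint_left]
      intro p hp hp'
      rw [Finset.mem_Icc] at hp hp'
      omega
    have hbi : M.biUnion (fun J => Finset.Icc (aJ J) (bJ J + 1)) = Finset.Icc 1 m := by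
      ext p
      rw [Finset.mem_biUnion, Finset.mem_Icc]
      constructor
      · rintro ⟨J, hJ, hp⟩
        obtain ⟨hab, hbm, _, _, ha1, hb1⟩ := hJprops J hJ
        rw [Finset.mem_Icc] at hp
        omega
      · rintro ⟨h1, h2⟩
        rcases Nat.even_or_odd p with hpe | hpo
        · obtain ⟨q, hq⟩ := hpe
          obtain ⟨J, hJ, hc1, hc2⟩ := hcover (p-1) ⟨q-1, by omega⟩ (by omega)
          exact ⟨J, hJ, Finset.mem_Icc.2 (by omega)⟩
        · obtain ⟨u, hu⟩ := hpo
          obtain ⟨J, hJ, hc1, hc2⟩ := hcover p ⟨u, hu⟩ (by omega)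
          exact ⟨J, hJ, Finset.mem_Icc.2 (by omega)⟩
    have hsum1 : ∑ J ∈ M, (J.card + 1) = m := by
      have h1 := Finset.card_biUnion hdisjIcc
      rw [hbi, Nat.card_Icc] at h1
      have h2 : ∀ J ∈ M, (Finset.Icc (aJ J) (bJ J + 1)).card = J.card + 1 := by
        intro J hJ
        obtain ⟨hab, hbm, _, hcard, ha1, hb1⟩ := hJprops J hJ
        rw [Nat.card_Icc]
        omega
      rw [Finset.sum_congr rfl h2] at h1
      omega
    have hDeq : D = M.biUnion (fun J => B.filter (fun I' => I' ⊆ J)) := by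
      ext I'
      rw [Finset.mem_biUnion]
      constructor
      · intro hI'
        obtain ⟨J, hJ, hsubJ⟩ := exists_max I' hI'
        exact ⟨J, hJ, Finset.mem_filter.2 ⟨(hDmem.1 hI').1, hsubJ⟩⟩
      · rintro ⟨J, hJ, hI'⟩
        rw [Finset.mem_filter] at hI'
        exact hDmem.2 ⟨hI'.1, Finset.ssubset_of_subset_of_ssubset hI'.2 (hMmem J hJ).2⟩
    have hfiltdisj : ∀ J ∈ M, ∀ J' ∈ M, J ≠ J' →
        Disjoint (B.filter (fun I' => I' ⊆ J)) (B.filter (fun I' => I' ⊆ J')) := by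
      intro J hJ J' hJ' hne
      rw [Finset.disjoint_left]
      intro I' h1 h2
      rw [Finset.mem_filter] at h1 h2
      obtain ⟨x, hx⟩ := calI1_nonempty (hcal I' h1.1)
      have hx2 : x ∈ J ∩ J' := Finset.mem_inter.2 ⟨h1.2 hx, h2.2 hx⟩
      rw [(hSpadeMM J hJ J' hJ' hne).1] at hx2
      exact absurd hx2 (Finset.notMem_empty x)
    have hDcard : D.card = ∑ J ∈ M, (B.filter (fun I' => I' ⊆ J)).card := by
      rw [hDeq, Finset.card_biUnion hfiltdisj]
    have hIH : ∀ J ∈ M, (B.filter (fun I' => I' ⊆ J)).card = (J.card + 1) / 2 := by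
      intro J hJ
      have hlt := Finset.card_lt_card (hMmem J hJ).2
      exact ih J (hMmem J hJ).1 (by omega)
    have hOddJ : ∀ J ∈ M, Odd J.card := fun J hJ => (hcal J (hMmem J hJ).1).2
    have hhalf : 2 * ∑ J ∈ M, (J.card + 1) / 2 = m := by
      have h3 : ∀ J ∈ M, 2 * ((J.card + 1) / 2) = J.card + 1 := by
        intro J hJ; obtain ⟨u, hu⟩ := hOddJ J hJ; omega
      rw [Finset.mul_sum, Finset.sum_congr rfl h3]
      exact hsum1
    have hcount : B.filter (fun I' => I' ⊆ I) = insert I D := by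
      ext I''
      rw [Finset.mem_filter, Finset.mem_insert, hD, Finset.mem_filter]
      constructor
      · rintro ⟨h1, h2⟩
        rcases eq_or_ne I'' I with he | hne
        · exact Or.inl he
        · exact Or.inr ⟨h1, Finset.ssubset_iff_subset_ne.2 ⟨h2, hne⟩⟩
      · rintro (rfl | ⟨h1, h2⟩)
        · exact ⟨hI, Finset.Subset.refl _⟩
        · exact ⟨h1, h2.subset⟩
    have hInotD : I ∉ D := by
      rw [hD, Finset.mem_filter]
      rintro ⟨_, h⟩
      exact (ssubset_irrefl I) h
    rw [hcount, Finset.card_insert_of_notMem hInotD, hDcard,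
      Finset.sum_congr rfl hIH]
    omega
end

section
/- Let N ≥ 3 be odd and let (S,E) be the cycle of length N. Then every B in phi satisfies |B| ≤ (N−1)/2. -/
/-! ### Auxiliary lemmas for statement 11 -/

-- arcs in ZMod N
def arcF (N : ℕ) (a : ZMod N) (c : ℕ) : Finset (ZMod N) :=
  (Finset.range c).image (fun k : ℕ => a + (k : ZMod N))

lemma mem_arcF {N : ℕ} {a : ZMod N} {c : ℕ} {x : ZMod N} :
    x ∈ arcF N a c ↔ ∃ k, k < c ∧ x = a + (k : ZMod N) := by
  simp [arcF, eq_comm]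

lemma natCast_inj_lt {N : ℕ} [NeZero N] {j k : ℕ} (hj : j < N) (hk : k < N)
    (h : (j : ZMod N) = (k : ZMod N)) : j = k := by
  have h1 := ZMod.val_cast_of_lt hj
  have h2 := ZMod.val_cast_of_lt hk
  rw [← h1, ← h2, h]

lemma arc_add_inj {N : ℕ} [NeZero N] {a : ZMod N} {j k : ℕ} (hj : j < N) (hk : k < N)
    (h : a + (j : ZMod N) = a + (k : ZMod N)) : j = k :=
  natCast_inj_lt hj hk (by exact add_left_cancel h)

lemma mem_arc_shift {N : ℕ} [NeZero N] {a : ZMod N} {k0 d e : ℕ}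
    (hk0 : k0 < N) (hde : d + e ≤ N) :
    a + (k0 : ZMod N) ∈ arcF N (a + (d : ZMod N)) e ↔ d ≤ k0 ∧ k0 < d + e := by
  rw [mem_arcF]
  constructor
  · rintro ⟨j, hj, hx⟩
    rw [add_assoc, ← Nat.cast_add] at hx
    have := arc_add_inj hk0 (by omega) hx
    omega
  · rintro ⟨h1, h2⟩
    refine ⟨k0 - d, by omega, ?_⟩
    rw [add_assoc, ← Nat.cast_add]
    have hdk : d + (k0 - d) = k0 := by omega
    rw [hdk]

lemma mem_arc_iff {N : ℕ} [NeZero N] {a : ZMod N} {k0 e : ℕ}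
    (hk0 : k0 < N) (he : e ≤ N) :
    a + (k0 : ZMod N) ∈ arcF N a e ↔ k0 < e := by
  have := mem_arc_shift (a := a) (d := 0) hk0 (by omega : 0 + e ≤ N)
  simpa using this

lemma conn_arcF (N : ℕ) (a : ZMod N) (d : ℕ) : ConnOn (cadj N) (arcF N a d) := by
  set J := arcF N a d with hJ
  have hsym : Symmetric (fun x y : ZMod N => x ∈ J ∧ y ∈ J ∧ cadj N x y) := by
    rintro x y ⟨hx, hy, hadj⟩
    exact ⟨hy, hx, hadj.symm⟩
  have key : ∀ i j : ℕ, i ≤ j → j < d →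
      Relation.ReflTransGen (fun x y : ZMod N => x ∈ J ∧ y ∈ J ∧ cadj N x y)
        (a + (i : ZMod N)) (a + (j : ZMod N)) := by
    intro i j hij
    induction j, hij using Nat.le_induction with
    | base => intro _; exact Relation.ReflTransGen.refl
    | succ j hij IH =>
      intro hjd
      refine Relation.ReflTransGen.tail (IH (by omega)) ?_
      refine ⟨mem_arcF.mpr ⟨j, by omega, rfl⟩, mem_arcF.mpr ⟨j + 1, by omega, rfl⟩, ?_⟩
      left; push_cast; ring
  intro s hs t ht
  obtain ⟨i, hi, rfl⟩ := mem_arcF.mp hs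
  obtain ⟨j, hj, rfl⟩ := mem_arcF.mp ht
  rcases le_total i j with h | h
  · exact key i j h hj
  · letI : Std.Symm (fun x y : ZMod N => x ∈ J ∧ y ∈ J ∧ cadj N x y) := ⟨fun _ _ h => hsym h⟩
    exact Std.Symm.symm _ _ (key j i h hi)

lemma union_arc {N : ℕ} (a : ZMod N) (c' c : ℕ) :
    arcF N a c' ∪ arcF N (a + (c' : ZMod N)) c = arcF N a (c' + c) := by
  ext x
  simp only [Finset.mem_union, mem_arcF]
  constructor
  · rintro (⟨k, hk, rfl⟩ | ⟨k, hk, rfl⟩)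
    · exact ⟨k, by omega, rfl⟩
    · exact ⟨c' + k, by omega, by push_cast; ring⟩
  · rintro ⟨k, hk, rfl⟩
    rcases lt_or_ge k c' with h | h
    · exact Or.inl ⟨k, h, rfl⟩
    · refine Or.inr ⟨k - c', by omega, ?_⟩
      rw [add_assoc, ← Nat.cast_add]
      congr 2
      omega

lemma sdiff_suffix {N : ℕ} [NeZero N] {a : ZMod N} {c' d : ℕ} (hc' : c' ≤ N) (hd : d ≤ c') :
    arcF N a c' \ arcF N (a + (d : ZMod N)) (c' - d) = arcF N a d := by
  ext x
  simp only [Finset.mem_sdiff]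
  constructor
  · rintro ⟨hx, hnx⟩
    obtain ⟨k, hk, rfl⟩ := mem_arcF.mp hx
    rw [mem_arc_shift (by omega) (by omega)] at hnx
    exact mem_arcF.mpr ⟨k, by omega, rfl⟩
  · intro hx
    obtain ⟨k, hk, rfl⟩ := mem_arcF.mp hx
    refine ⟨mem_arcF.mpr ⟨k, by omega, rfl⟩, ?_⟩
    rw [mem_arc_shift (by omega) (by omega)]
    omega

lemma sdiff_prefix {N : ℕ} [NeZero N] {a : ZMod N} {c' d : ℕ} (hc' : c' ≤ N) (hd : d ≤ c') :
    arcF N a c' \ arcF N a d = arcF N (a + (d : ZMod N)) (c' - d) := by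
  ext x
  simp only [Finset.mem_sdiff]
  constructor
  · rintro ⟨hx, hnx⟩
    obtain ⟨k, hk, rfl⟩ := mem_arcF.mp hx
    rw [mem_arc_iff (by omega) (by omega)] at hnx
    rw [mem_arc_shift (by omega) (by omega)]
    omega
  · intro hx
    have hx' := hx
    rw [mem_arcF] at hx'
    obtain ⟨k, hk, rfl⟩ := hx'
    rw [add_assoc, ← Nat.cast_add]
    rw [add_assoc, ← Nat.cast_add] at hx
    refine ⟨mem_arcF.mpr ⟨d + k, by omega, rfl⟩, ?_⟩
    rw [mem_arc_iff (by omega) (by omega)]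
    omega
lemma arc_of_CalI1 {N : ℕ} (hN : 3 ≤ N) {I : Finset (ZMod N)} (hI : CalI1 (cadj N) I) :
    ∃ (a : ZMod N) (c : ℕ), 1 ≤ c ∧ c < N ∧ I = arcF N a c := by
  haveI : NeZero N := ⟨by omega⟩
  obtain ⟨⟨m, f, hinj, hIeq, hadj⟩, -⟩ := hI
  have hcard : I.card = m + 1 := by
    rw [hIeq, Finset.card_image_of_injective _ hinj, Finset.card_univ, Fintype.card_fin]
  have hmN : m + 1 ≤ N := by
    have h1 := Finset.card_le_univ I
    rw [hcard] at h1
    rwa [ZMod.card] at h1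
  rcases Nat.eq_zero_or_pos m with hm0 | hmpos
  · subst hm0
    refine ⟨f ⟨0, by omega⟩, 1, le_refl 1, by omega, ?_⟩
    rw [hIeq]
    ext x
    simp only [Finset.mem_image, Finset.mem_univ, true_and, mem_arcF]
    constructor
    · rintro ⟨i, rfl⟩
      exact ⟨0, by omega, by rw [Fin.fin_one_eq_zero i]; simp⟩
    · rintro ⟨k, hk, rfl⟩
      interval_cases k
      exact ⟨⟨0, by omega⟩, by simp⟩
  -- m ≥ 1
  have hstep : ∀ (i : ℕ) (h : i + 1 < m + 1),
      f ⟨i + 1, h⟩ = f ⟨i, by omega⟩ + 1 ∨ f ⟨i + 1, h⟩ = f ⟨i, by omega⟩ - 1 := by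
    intro i h
    have := (hadj ⟨i, by omega⟩ ⟨i + 1, h⟩).mpr (Or.inl rfl)
    rcases this with h1 | h1
    · exact Or.inl h1
    · right; rw [h1]; ring
  obtain ⟨ε, hε1, hfe⟩ :
      ∃ ε : ZMod N, (ε = 1 ∨ ε = -1) ∧ f ⟨1, by omega⟩ = f ⟨0, by omega⟩ + ε := by
    rcases hstep 0 (by omega) with h | h
    · exact ⟨1, Or.inl rfl, h⟩
    · exact ⟨-1, Or.inr rfl, by rw [h]; ring⟩
  have key : ∀ i (h : i < m + 1), f ⟨i, h⟩ = f ⟨0, by omega⟩ + ε * (i : ZMod N) := by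
    intro i
    induction i using Nat.strong_induction_on with
    | _ i IH =>
      intro h
      match i, h with
      | 0, h => simp
      | 1, h => rw [hfe]; push_cast; ring
      | (j + 2), h =>
        have h1 : j + 1 < m + 1 := by omega
        have h0 : j < m + 1 := by omega
        have e1 := IH (j + 1) (by omega) h1
        have e0 := IH j (by omega) h0
        have hcast : ((j + 2 : ℕ) : ZMod N) = (j : ZMod N) + 2 := by push_cast; ring
        have hcast1 : ((j + 1 : ℕ) : ZMod N) = (j : ZMod N) + 1 := by push_cast; ring
        rcases hstep (j + 1) h with hs | hs <;> rcases hε1 with hε | hε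
        · -- +1 step, ε = 1 : good
          rw [hs, e1, hcast, hcast1, hε]; ring
        · -- +1 step, ε = -1 : f (j+2) = f j, contradiction
          exfalso
          have : f ⟨j + 2, h⟩ = f ⟨j, h0⟩ := by
            rw [hs, e1, e0, hcast1, hε]; ring
          have := hinj this
          simp only [Fin.mk.injEq] at this
          omega
        · -- -1 step, ε = 1 : contradiction
          exfalso
          have : f ⟨j + 2, h⟩ = f ⟨j, h0⟩ := by
            rw [hs, e1, e0, hcast1, hε]; ring
          have := hinj this
          simp only [Fin.mk.injEq] at this
          omega
        · -- -1 step, ε = -1 : good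
          rw [hs, e1, hcast, hcast1, hε]; ring
  have hmlt : m + 1 < N := by
    rcases lt_or_eq_of_le hmN with h | h
    · exact h
    -- m + 1 = N : the path closes into a cycle, contradiction
    exfalso
    have hmcast : ((m : ℕ) : ZMod N) = -1 := by
      have : ((m + 1 : ℕ) : ZMod N) = 0 := by rw [h, ZMod.natCast_self]
      push_cast at this
      linear_combination this
    have hfm : f ⟨m, by omega⟩ = f ⟨0, by omega⟩ - ε := by
      rw [key m (by omega), hmcast]; ring
    have hc : cadj N (f ⟨0, by omega⟩) (f ⟨m, by omega⟩) := by
      rcases hε1 with hε | hε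
      · right; rw [hfm, hε]; ring
      · left; rw [hfm, hε]; ring
    have := (hadj ⟨0, by omega⟩ ⟨m, by omega⟩).mp hc
    simp only at this
    omega
  rcases hε1 with hε | hε
  · -- increasing: I = arcF (f 0) (m+1)
    refine ⟨f ⟨0, by omega⟩, m + 1, by omega, hmlt, ?_⟩
    rw [hIeq]
    ext x
    simp only [Finset.mem_image, Finset.mem_univ, true_and, mem_arcF]
    constructor
    · rintro ⟨i, rfl⟩
      refine ⟨(i : ℕ), i.isLt, ?_⟩
      have := key (i : ℕ) i.isLt
      rw [Fin.eta] at this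
      rw [this, hε]; ring
    · rintro ⟨k, hk, rfl⟩
      refine ⟨⟨k, hk⟩, ?_⟩
      rw [key k hk, hε]; ring
  · -- decreasing: I = arcF (f 0 - m) (m+1)
    refine ⟨f ⟨0, by omega⟩ - (m : ZMod N), m + 1, by omega, hmlt, ?_⟩
    rw [hIeq]
    ext x
    simp only [Finset.mem_image, Finset.mem_univ, true_and, mem_arcF]
    constructor
    · rintro ⟨i, rfl⟩
      refine ⟨m - (i : ℕ), by omega, ?_⟩
      have := key (i : ℕ) i.isLt
      rw [Fin.eta] at this
      rw [this, hε]
      have : ((m - (i : ℕ) : ℕ) : ZMod N) = (m : ZMod N) - ((i : ℕ) : ZMod N) := by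
        rw [Nat.cast_sub (by omega : (i : ℕ) ≤ m)]
      rw [this]; ring
    · rintro ⟨k, hk, rfl⟩
      refine ⟨⟨m - k, by omega⟩, ?_⟩
      rw [key (m - k) (by omega), hε]
      have : ((m - k : ℕ) : ZMod N) = (m : ZMod N) - (k : ZMod N) := by
        rw [Nat.cast_sub (by omega : k ≤ m)]
      rw [this]; ring
section interaction

variable {N : ℕ} [NeZero N] {a a' : ZMod N} {c c' : ℕ}

/-- Symmetry of the P0-style relation. -/
lemma rel_swap {S : Type} [DecidableEq S] {adj : S → S → Prop} {I I' : Finset S}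
    (h : I = I' ∨ Spade adj I I' ∨ Prec adj I I' ∨ Prec adj I' I) :
    I' = I ∨ Spade adj I' I ∨ Prec adj I' I ∨ Prec adj I I' := by
  rcases h with h | h | h | h
  · exact Or.inl h.symm
  · exact Or.inr (Or.inl ⟨by rw [Finset.inter_comm]; exact h.1,
      by rw [Finset.union_comm]; exact h.2⟩)
  · exact Or.inr (Or.inr (Or.inr h))
  · exact Or.inr (Or.inr (Or.inl h))

lemma arc_rel_right_core (hc : 1 ≤ c) (hcN : c < N) (hc' : 1 ≤ c') (hc'N : c' < N)
    (hcc : c ≤ c')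
    (hrel : arcF N a c = arcF N a' c' ∨ Spade (cadj N) (arcF N a c) (arcF N a' c') ∨
      Prec (cadj N) (arcF N a c) (arcF N a' c') ∨ Prec (cadj N) (arcF N a' c') (arcF N a c))
    (hend : a + ((c - 1 : ℕ) : ZMod N) = a' + ((c' - 1 : ℕ) : ZMod N)) :
    arcF N a c = arcF N a' c' := by
  have e1 : ((c - 1 : ℕ) : ZMod N) = (c : ZMod N) - 1 := by
    rw [Nat.cast_sub hc]; norm_num
  have e2 : ((c' - 1 : ℕ) : ZMod N) = (c' : ZMod N) - 1 := by
    rw [Nat.cast_sub hc']; norm_num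
  have e3 : ((c' - c : ℕ) : ZMod N) = (c' : ZMod N) - (c : ZMod N) := by
    rw [Nat.cast_sub hcc]
  rw [e1, e2] at hend
  have ha : a = a' + ((c' - c : ℕ) : ZMod N) := by
    rw [e3]; linear_combination hend
  have hsub : arcF N a c ⊆ arcF N a' c' := by
    intro x hx
    obtain ⟨k, hk, rfl⟩ := mem_arcF.mp hx
    rw [ha, add_assoc, ← Nat.cast_add]
    exact mem_arcF.mpr ⟨c' - c + k, by omega, rfl⟩
  rcases hrel with h | h | h | h
  · exact h
  · exfalso
    have hmem : a + ((c - 1 : ℕ) : ZMod N) ∈ arcF N a c :=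
      mem_arcF.mpr ⟨c - 1, by omega, rfl⟩
    have : a + ((c - 1 : ℕ) : ZMod N) ∈ arcF N a c ∩ arcF N a' c' :=
      Finset.mem_inter.mpr ⟨hmem, hsub hmem⟩
    rw [h.1] at this
    exact absurd this (Finset.notMem_empty _)
  · exfalso
    apply h.2
    have hd : arcF N a' c' \ arcF N a c = arcF N a' (c' - c) := by
      have := sdiff_suffix (a := a') (c' := c') (d := c' - c) (le_of_lt hc'N) (by omega)
      rw [show c' - (c' - c) = c by omega] at this
      rw [← ha] at this
      exact this
    rw [hd]
    exact conn_arcF N a' (c' - c)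
  · exact absurd (lt_of_lt_of_le h.1 hsub) (lt_irrefl _)

lemma arc_rel_right (hc : 1 ≤ c) (hcN : c < N) (hc' : 1 ≤ c') (hc'N : c' < N)
    (hrel : arcF N a c = arcF N a' c' ∨ Spade (cadj N) (arcF N a c) (arcF N a' c') ∨
      Prec (cadj N) (arcF N a c) (arcF N a' c') ∨ Prec (cadj N) (arcF N a' c') (arcF N a c))
    (hend : a + ((c - 1 : ℕ) : ZMod N) = a' + ((c' - 1 : ℕ) : ZMod N)) :
    arcF N a c = arcF N a' c' := by
  rcases le_total c c' with h | h
  · exact arc_rel_right_core hc hcN hc' hc'N h hrel hend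
  · exact (arc_rel_right_core hc' hc'N hc hcN h (rel_swap hrel) hend.symm).symm

lemma arc_rel_left_core (hc : 1 ≤ c) (hcN : c < N) (hc' : 1 ≤ c') (hc'N : c' < N)
    (hcc : c ≤ c')
    (hrel : arcF N a c = arcF N a c' ∨ Spade (cadj N) (arcF N a c) (arcF N a c') ∨
      Prec (cadj N) (arcF N a c) (arcF N a c') ∨ Prec (cadj N) (arcF N a c') (arcF N a c)) :
    arcF N a c = arcF N a c' := by
  have hsub : arcF N a c ⊆ arcF N a c' := by
    intro x hx
    obtain ⟨k, hk, rfl⟩ := mem_arcF.mp hx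
    exact mem_arcF.mpr ⟨k, by omega, rfl⟩
  rcases hrel with h | h | h | h
  · exact h
  · exfalso
    have hmem : a + ((0 : ℕ) : ZMod N) ∈ arcF N a c := mem_arcF.mpr ⟨0, by omega, rfl⟩
    have : a + ((0 : ℕ) : ZMod N) ∈ arcF N a c ∩ arcF N a c' :=
      Finset.mem_inter.mpr ⟨hmem, hsub hmem⟩
    rw [h.1] at this
    exact absurd this (Finset.notMem_empty _)
  · exfalso
    apply h.2
    rw [sdiff_prefix (le_of_lt hc'N) hcc]
    exact conn_arcF N _ _
  · exact absurd (lt_of_lt_of_le h.1 hsub) (lt_irrefl _)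

lemma arc_rel_left (hc : 1 ≤ c) (hcN : c < N) (hc' : 1 ≤ c') (hc'N : c' < N)
    (hrel : arcF N a c = arcF N a c' ∨ Spade (cadj N) (arcF N a c) (arcF N a c') ∨
      Prec (cadj N) (arcF N a c) (arcF N a c') ∨ Prec (cadj N) (arcF N a c') (arcF N a c)) :
    arcF N a c = arcF N a c' := by
  rcases le_total c c' with h | h
  · exact arc_rel_left_core hc hcN hc' hc'N h hrel
  · exact (arc_rel_left_core hc' hc'N hc hcN h (rel_swap hrel)).symm

lemma arc_cross (hc : 1 ≤ c) (hcN : c < N) (hc' : 1 ≤ c') (hc'N : c' < N)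
    (hrel : arcF N a c = arcF N a' c' ∨ Spade (cadj N) (arcF N a c) (arcF N a' c') ∨
      Prec (cadj N) (arcF N a c) (arcF N a' c') ∨ Prec (cadj N) (arcF N a' c') (arcF N a c))
    (hend : a' + (c' : ZMod N) = a) : False := by
  have e2 : ((c' - 1 : ℕ) : ZMod N) = (c' : ZMod N) - 1 := by
    rw [Nat.cast_sub hc']; norm_num
  have hmema : ∀ h : a ∈ arcF N a' c', False := by
    intro h
    obtain ⟨k, hk, hx⟩ := mem_arcF.mp h
    rw [← hend] at hx
    exact absurd (arc_add_inj (by omega) (by omega) hx) (by omega)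
  rcases hrel with h | h | h | h
  · -- equal arcs
    apply hmema
    rw [← h]
    exact mem_arcF.mpr ⟨0, by omega, by simp⟩
  · -- spade : the union is a single arc, hence connected
    apply h.2
    have hu : arcF N a c ∪ arcF N a' c' = arcF N a' (c' + c) := by
      rw [Finset.union_comm, ← hend]
      exact union_arc a' c' c
    rw [hu]
    exact conn_arcF N a' (c' + c)
  · -- arcF a c ⊂ arcF a' c' : then a ∈ arcF a' c'
    apply hmema
    exact h.1.subset (mem_arcF.mpr ⟨0, by omega, by simp⟩)
  · -- arcF a' c' ⊂ arcF a c : the right end of I' lies in I but equals a - 1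
    obtain ⟨j, hj, heq⟩ := mem_arcF.mp
      (h.1.subset (mem_arcF.mpr ⟨c' - 1, by omega, rfl⟩))
    have hz : ((j + 1 : ℕ) : ZMod N) = 0 := by
      have : a + ((j + 1 : ℕ) : ZMod N) = a + ((0 : ℕ) : ZMod N) := by
        push_cast
        have : a' + ((c' - 1 : ℕ) : ZMod N) + 1 = a := by
          rw [e2]; linear_combination hend
        linear_combination this - heq
      have h0 : ((0 : ℕ) : ZMod N) = 0 := by norm_num
      rw [h0] at this
      simpa using add_left_cancel this
    have hdvd : N ∣ j + 1 := by
      have := (ZMod.natCast_eq_zero_iff (j + 1) N).mp hz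
      exact this
    have := Nat.le_of_dvd (by omega) hdvd
    omega

end interaction

theorem statement11' (N : ℕ) [NeZero N] (hN : 3 ≤ N) (hodd : Odd N)
    (B : Finset (Finset (ZMod N))) (hB : (∀ I ∈ B, CalI1 (cadj N) I) ∧
      (∀ I ∈ B, ∀ I' ∈ B, I = I' ∨ Spade (cadj N) I I' ∨ Prec (cadj N) I I' ∨ Prec (cadj N) I' I)) :
    B.card ≤ (N - 1) / 2 := by
  classical
  obtain ⟨hCal, hP0⟩ := hB
  have hex : ∀ I : Finset (ZMod N), ∃ p : ZMod N × ℕ,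
      I ∈ B → (1 ≤ p.2 ∧ p.2 < N ∧ I = arcF N p.1 p.2) := by
    intro I
    by_cases hI : I ∈ B
    · obtain ⟨a, c, h⟩ := arc_of_CalI1 hN (hCal I hI)
      exact ⟨(a, c), fun _ => h⟩
    · exact ⟨(0, 0), fun h => absurd h hI⟩
  choose pa hpa using hex
  set rF : Finset (ZMod N) → ZMod N :=
    fun I => (pa I).1 + (((pa I).2 - 1 : ℕ) : ZMod N) with hrF
  set lF : Finset (ZMod N) → ZMod N := fun I => (pa I).1 - 1 with hlF
  have hrelarc : ∀ I ∈ B, ∀ I' ∈ B,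
      arcF N (pa I).1 (pa I).2 = arcF N (pa I').1 (pa I').2 ∨
      Spade (cadj N) (arcF N (pa I).1 (pa I).2) (arcF N (pa I').1 (pa I').2) ∨
      Prec (cadj N) (arcF N (pa I).1 (pa I).2) (arcF N (pa I').1 (pa I').2) ∨
      Prec (cadj N) (arcF N (pa I').1 (pa I').2) (arcF N (pa I).1 (pa I).2) := by
    intro I hI I' hI'
    have h := hP0 I hI I' hI'
    rw [(hpa I hI).2.2, (hpa I' hI').2.2] at h
    exact h
  have hrinj : Set.InjOn rF ↑B := by
    intro I hI I' hI' heq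
    have h := hpa I hI
    have h' := hpa I' hI'
    have harc := arc_rel_right h.1 h.2.1 h'.1 h'.2.1 (hrelarc I hI I' hI') heq
    rw [h.2.2, h'.2.2, harc]
  have hlinj : Set.InjOn lF ↑B := by
    intro I hI I' hI' heq
    have h := hpa I hI
    have h' := hpa I' hI'
    have ha : (pa I).1 = (pa I').1 := by
      simp only [hlF] at heq
      linear_combination heq
    have hrel' := hrelarc I hI I' hI'
    rw [ha] at hrel'
    have harc := arc_rel_left h.1 h.2.1 h'.1 h'.2.1 hrel'
    rw [h.2.2, h'.2.2, ha, harc]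
  have hcross : ∀ I ∈ B, ∀ I' ∈ B, rF I' ≠ lF I := by
    intro I hI I' hI' heq
    have h := hpa I hI
    have h' := hpa I' hI'
    apply arc_cross h.1 h.2.1 h'.1 h'.2.1 (hrelarc I hI I' hI')
    have e2 : (((pa I').2 - 1 : ℕ) : ZMod N) = (((pa I').2 : ℕ) : ZMod N) - 1 := by
      rw [Nat.cast_sub h'.1]; norm_num
    simp only [hrF, hlF] at heq
    rw [e2] at heq
    linear_combination heq
  have h1 : (B.image rF).card = B.card := Finset.card_image_of_injOn hrinj
  have h2 : (B.image lF).card = B.card := Finset.card_image_of_injOn hlinj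
  have hdis : Disjoint (B.image rF) (B.image lF) := by
    rw [Finset.disjoint_left]
    rintro x hx hx'
    obtain ⟨I', hI', rfl⟩ := Finset.mem_image.mp hx
    obtain ⟨I, hI, heq⟩ := Finset.mem_image.mp hx'
    exact hcross I hI I' hI' heq.symm
  have h3 : (B.image rF ∪ B.image lF).card = 2 * B.card := by
    rw [Finset.card_union_of_disjoint hdis, h1, h2]; ring
  have h4 : (B.image rF ∪ B.image lF).card ≤ N := by
    have h5 := Finset.card_le_univ (B.image rF ∪ B.image lF)
    rwa [ZMod.card] at h5
  obtain ⟨t, ht⟩ := hodd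
  omega

/-- every `B ∈ phi` satisfies `|B| ≤ (N-1)/2`. -/
theorem statement11 (N : ℕ) [NeZero N] (hN : 3 ≤ N) (hodd : Odd N)
    (B : Finset (Finset (ZMod N))) (hB : B ∈ phiSet (cadj N)) :
    B.card ≤ (N - 1) / 2 := by
  obtain ⟨hCal, hP0, -⟩ := hB
  exact statement11' N hN hodd B ⟨hCal, hP0⟩
end
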